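/- Let s = s₁ + i s₂ with s₁ > 0, c > 0, and ξ ∈ ℝ². Let β be the complex square root of s²/c² + |ξ|² with Re β > 0, and write β = a + i b. Then a·s₁ + b·s₂ ≥ 0. -/

import Mathlib

/-- If `β² = s²/c² + ‖ξ‖²` with `Re β > 0` and `Re s > 0`, `c > 0`,
then `a·s₁ + b·s₂ ≥ 0` where `β = a + ib`, `s = s₁ + i s₂`. -/
theorem stmt_0 (s : ℂ) (s₁ s₂ : ℝ) (hs : s = ⟨s₁, s₂⟩) (hs₁ : 0 < s₁)
    (c : ℝ) (hc : 0 < c) (ξ : EuclideanSpace ℝ (Fin 2)) (β : ℂ)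
    (hβ : β ^ 2 = s ^ 2 / (c : ℂ) ^ 2 + (‖ξ‖ ^ 2 : ℝ))
    (hre : 0 < β.re) :
    0 ≤ β.re * s₁ + β.im * s₂ := by
  have hc2 : (c:ℝ)^2 ≠ 0 := by positivity
  have him := congrArg Complex.im hβ
  simp only [hs, pow_two, Complex.mul_im, Complex.mul_re, Complex.div_im, Complex.div_re,
    Complex.add_im, Complex.ofReal_im, Complex.ofReal_re, Complex.normSq_mk, mul_zero, zero_mul,
    add_zero, zero_add] at him
  field_simp at him
  have hab : β.re * β.im = s₁ * s₂ / c^2 := by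
    rw [eq_div_iff hc2]
    have hn : Complex.normSq ((c:ℂ)^2) = (c^2)^2 := by
      rw [← Complex.ofReal_pow, Complex.normSq_ofReal]; ring
    rw [hn] at him
    apply mul_right_cancel₀ (show (2:ℝ)*c^2 ≠ 0 by positivity)
    linear_combination him
  have key : β.re * (β.re * s₁ + β.im * s₂) = s₁ * (β.re^2 + s₂^2 / c^2) := by
    linear_combination s₂ * hab
  have h1 : 0 < s₁ * (β.re^2 + s₂^2 / c^2) ∨ 0 = s₁ * (β.re^2 + s₂^2 / c^2) := by
    rcases (by positivity : (0:ℝ) ≤ s₁ * (β.re^2 + s₂^2 / c^2)).lt_or_eq with h | h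
    · exact Or.inl h
    · exact Or.inr h
  nlinarith [key, mul_pos hre hre, (by positivity : (0:ℝ) ≤ s₁ * (β.re^2 + s₂^2 / c^2))]
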